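/- arXiv:2307.02621 — 2 statements merged into one kernel-verified Lean document; each statement's English description precedes it below -/
import Mathlib

section
/- Let C_e and C_micro be symmetric positive definite linear maps on Sym(3) with ⟨C_e σ, σ⟩ ≥ c_e|σ|² and ⟨C_micro σ, σ⟩ ≥ c_m|σ|² for positive constants c_e, c_m. Define the block operator 𝔸 on Sym(3) × Sym(3) by 𝔸(σ₁, σ₂) = (C_e(σ₁ - σ₂), -C_e(σ₁ - σ₂) + C_micro σ₂). Then ⟨𝔸(σ₁,σ₂), (σ₁,σ₂)⟩ ≥ (2/9)·min(c_e, c_m)·(|σ₁|² + |σ₂|²) for all (σ₁, σ₂). -/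
open Matrix

/-- Frobenius inner product on 3×3 real matrices. -/
noncomputable def finner (A B : Matrix (Fin 3) (Fin 3) ℝ) : ℝ := ∑ i, ∑ j, A i j * B i j

lemma finner_sub_right (A B C : Matrix (Fin 3) (Fin 3) ℝ) :
    finner A (B - C) = finner A B - finner A C := by
  simp [finner, Matrix.sub_apply, mul_sub, Finset.sum_sub_distrib]

lemma finner_add_left (A B C : Matrix (Fin 3) (Fin 3) ℝ) :
    finner (A + B) C = finner A C + finner B C := by
  simp [finner, Matrix.add_apply, add_mul, Finset.sum_add_distrib]

lemma finner_neg_left (A B : Matrix (Fin 3) (Fin 3) ℝ) :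
    finner (-A) B = -finner A B := by
  simp [finner, Matrix.neg_apply]

lemma finner_nonneg (A : Matrix (Fin 3) (Fin 3) ℝ) : 0 ≤ finner A A := by
  apply Finset.sum_nonneg
  intro i _
  exact Finset.sum_nonneg fun j _ => mul_self_nonneg _

lemma finner_key (A B : Matrix (Fin 3) (Fin 3) ℝ) :
    2 / 9 * (finner A A + finner B B) ≤ finner (A - B) (A - B) + finner B B := by
  have h : ∀ i j : Fin 3, 2 / 9 * (A i j * A i j + B i j * B i j)
      ≤ (A i j - B i j) * (A i j - B i j) + B i j * B i j := by
    intro i j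
    nlinarith [sq_nonneg (7 * A i j - 9 * B i j), sq_nonneg (B i j)]
  simp only [finner, Matrix.sub_apply, ← Finset.sum_add_distrib, Finset.mul_sum]
  exact Finset.sum_le_sum fun i _ => Finset.sum_le_sum fun j _ => h i j

/-- Positive definiteness of the block operator
`𝔸(σ₁,σ₂) = (C_e(σ₁-σ₂), -C_e(σ₁-σ₂) + C_micro σ₂)` on `Sym(3) × Sym(3)`:
`⟨𝔸(σ₁,σ₂),(σ₁,σ₂)⟩ ≥ (2/9)·min(c_e,c_m)·(|σ₁|² + |σ₂|²)`. -/
theorem stmt1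
    (Ce Cm : Matrix (Fin 3) (Fin 3) ℝ →ₗ[ℝ] Matrix (Fin 3) (Fin 3) ℝ)
    (ce cm : ℝ) (hce : 0 < ce) (hcm : 0 < cm)
    (hCeSym : ∀ σ τ : Matrix (Fin 3) (Fin 3) ℝ, σᵀ = σ → τᵀ = τ →
      finner (Ce σ) τ = finner σ (Ce τ))
    (hCmSym : ∀ σ τ : Matrix (Fin 3) (Fin 3) ℝ, σᵀ = σ → τᵀ = τ →
      finner (Cm σ) τ = finner σ (Cm τ))
    (hCePD : ∀ σ : Matrix (Fin 3) (Fin 3) ℝ, σᵀ = σ → finner (Ce σ) σ ≥ ce * finner σ σ)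
    (hCmPD : ∀ σ : Matrix (Fin 3) (Fin 3) ℝ, σᵀ = σ → finner (Cm σ) σ ≥ cm * finner σ σ)
    (σ₁ σ₂ : Matrix (Fin 3) (Fin 3) ℝ) (h1 : σ₁ᵀ = σ₁) (h2 : σ₂ᵀ = σ₂) :
    finner (Ce (σ₁ - σ₂)) σ₁ + finner (-(Ce (σ₁ - σ₂)) + Cm σ₂) σ₂
      ≥ (2 / 9) * min ce cm * (finner σ₁ σ₁ + finner σ₂ σ₂) := by
  set d := σ₁ - σ₂ with hd
  have hdsym : dᵀ = d := by rw [hd, Matrix.transpose_sub, h1, h2]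
  have hrw : finner (Ce d) σ₁ + finner (-(Ce d) + Cm σ₂) σ₂
      = finner (Ce d) d + finner (Cm σ₂) σ₂ := by
    rw [finner_add_left, finner_neg_left, hd, finner_sub_right]
    ring
  rw [hrw]
  have h1' : finner (Ce d) d ≥ ce * finner d d := hCePD d hdsym
  have h2' : finner (Cm σ₂) σ₂ ≥ cm * finner σ₂ σ₂ := hCmPD σ₂ h2
  set m := min ce cm with hm
  have hm0 : 0 < m := lt_min hce hcm
  have hme : m ≤ ce := min_le_left _ _
  have hmm : m ≤ cm := min_le_right _ _
  have hdn : 0 ≤ finner d d := finner_nonneg d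
  have h2n : 0 ≤ finner σ₂ σ₂ := finner_nonneg σ₂
  have key := finner_key σ₁ σ₂
  rw [← hd] at key
  nlinarith [mul_le_mul_of_nonneg_left key (le_of_lt hm0),
    mul_le_mul_of_nonneg_right hme hdn, mul_le_mul_of_nonneg_right hmm h2n]
end

section
/- Let H = H₀¹(Ω;ℝ³) × H₀(Curl;Ω) be the product Hilbert space, and let a be the bilinear form of the relaxed micromorphic model as above with bounded measurable coefficients C_e, C_micro, L_c satisfying symmetry and uniform positive definiteness (on symmetric matrices for C_e, C_micro, on all matrices for L_c), on a bounded Lipschitz domain Ω where the incompatible Korn inequality holds. Then for every f ∈ H^{-1}(Ω;ℝ³) and every M in the dual of H₀(Curl;Ω), there exists a unique pair (u,P) ∈ H such that a((u,P),(v,W)) = ⟨f,v⟩ + ⟨M,W⟩ for all (v,W) ∈ H. -/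
open RealInnerProductSpace

set_option maxHeartbeats 1000000 in
/-- Existence and uniqueness of weak solutions of the relaxed micromorphic model.
`H1` plays the role of `H₀¹(Ω;ℝ³)`, `H2` of `H₀(Curl;Ω)` (norm = `H(Curl)`-norm),
`L, L'` of the `L²` spaces of (symmetric) matrix fields; `symGrad`, `symP`, `curlP`
are the bounded operators `u ↦ sym ∇u`, `P ↦ sym P`, `P ↦ Curl P`; the coefficient
tensors act as bounded symmetric operators on `L²`, positive definite (on the
symmetric-valued part for `C_e`, `C_micro`, everywhere for `L_c`); the Korn
inequality and the incompatible Korn inequality are assumed, as valid on a bounded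
Lipschitz domain. Then for every `f ∈ H^{-1}` and `M ∈ (H₀(Curl))*` there is a
unique pair `(u,P)` solving the weak formulation. -/
theorem stmt8 {H1 H2 L L' : Type*}
    [NormedAddCommGroup H1] [InnerProductSpace ℝ H1] [CompleteSpace H1]
    [NormedAddCommGroup H2] [InnerProductSpace ℝ H2] [CompleteSpace H2]
    [NormedAddCommGroup L] [InnerProductSpace ℝ L] [CompleteSpace L]
    [NormedAddCommGroup L'] [InnerProductSpace ℝ L'] [CompleteSpace L']
    (symGrad : H1 →L[ℝ] L) (symP : H2 →L[ℝ] L) (curlP : H2 →L[ℝ] L')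
    (Ce Cm : L →L[ℝ] L) (Lc : L' →L[ℝ] L')
    (hCeSym : ∀ a b : L, ⟪Ce a, b⟫ = ⟪a, Ce b⟫)
    (hCmSym : ∀ a b : L, ⟪Cm a, b⟫ = ⟪a, Cm b⟫)
    (hLcSym : ∀ a b : L', ⟪Lc a, b⟫ = ⟪a, Lc b⟫)
    (ce cm lc : ℝ) (hce : 0 < ce) (hcm : 0 < cm) (hlc : 0 < lc)
    (hCePD : ∀ a : L, ⟪Ce a, a⟫ ≥ ce * ‖a‖ ^ 2)
    (hCmPD : ∀ a : L, ⟪Cm a, a⟫ ≥ cm * ‖a‖ ^ 2)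
    (hLcPD : ∀ a : L', ⟪Lc a, a⟫ ≥ lc * ‖a‖ ^ 2)
    (CK : ℝ) (hCK : 0 < CK)
    (hKorn : ∀ u : H1, ‖u‖ ^ 2 ≤ CK * ‖symGrad u‖ ^ 2)
    (ctil : ℝ) (hctil : 0 < ctil)
    (hKornInc : ∀ P : H2, ‖P‖ ^ 2 ≤ ctil * (‖symP P‖ ^ 2 + ‖curlP P‖ ^ 2))
    (f : H1 →L[ℝ] ℝ) (M : H2 →L[ℝ] ℝ) :
    ∃! uP : H1 × H2, ∀ vW : H1 × H2,
      ⟪Ce (symGrad uP.1 - symP uP.2), symGrad vW.1 - symP vW.2⟫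
        + ⟪Cm (symP uP.2), symP vW.2⟫ + ⟪Lc (curlP uP.2), curlP vW.2⟫
      = f vW.1 + M vW.2 := by
  -- Work on the Hilbert space `V = WithLp 2 (H1 × H2)`.
  set V := WithLp 2 (H1 × H2) with hV
  let e : V ≃L[ℝ] H1 × H2 := WithLp.prodContinuousLinearEquiv 2 ℝ H1 H2
  let pr1 : V →L[ℝ] H1 := (ContinuousLinearMap.fst ℝ H1 H2).comp e.toContinuousLinearMap
  let pr2 : V →L[ℝ] H2 := (ContinuousLinearMap.snd ℝ H1 H2).comp e.toContinuousLinearMap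
  let D : V →L[ℝ] L := symGrad.comp pr1 - symP.comp pr2
  let S : V →L[ℝ] L := symP.comp pr2
  let Cu : V →L[ℝ] L' := curlP.comp pr2
  let B : V →L[ℝ] V →L[ℝ] ℝ :=
    ((innerSL ℝ).bilinearComp (Ce.comp D) D) + ((innerSL ℝ).bilinearComp (Cm.comp S) S)
      + ((innerSL ℝ).bilinearComp (Lc.comp Cu) Cu)
  have hBapp : ∀ x y : V, B x y =
      ⟪Ce (D x), D y⟫ + ⟪Cm (S x), S y⟫ + ⟪Lc (Cu x), Cu y⟫ := by
    intro x y; rfl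
  have hD : ∀ x : V, D x = symGrad (e x).1 - symP (e x).2 := fun x => rfl
  have hS : ∀ x : V, S x = symP (e x).2 := fun x => rfl
  have hCu : ∀ x : V, Cu x = curlP (e x).2 := fun x => rfl
  -- Coercivity
  have hcoer : IsCoercive B := by
    set m : ℝ := min ce (min cm lc) with hm
    have hm0 : 0 < m := lt_min hce (lt_min hcm hlc)
    set K : ℝ := 2 * CK + ctil with hK
    have hK0 : 0 < K := by positivity
    refine ⟨m / K, by positivity, fun x => ?_⟩
    have hnx : ‖x‖ ^ 2 = ‖(e x).1‖ ^ 2 + ‖(e x).2‖ ^ 2 := by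
      exact WithLp.prod_norm_sq_eq_of_L2 x
    have h1 : ⟪Ce (D x), D x⟫ ≥ ce * ‖D x‖ ^ 2 := hCePD _
    have h2 : ⟪Cm (S x), S x⟫ ≥ cm * ‖S x‖ ^ 2 := hCmPD _
    have h3 : ⟪Lc (Cu x), Cu x⟫ ≥ lc * ‖Cu x‖ ^ 2 := hLcPD _
    have hgrad : ‖symGrad (e x).1‖ ^ 2 ≤ 2 * ‖D x‖ ^ 2 + 2 * ‖S x‖ ^ 2 := by
      have : symGrad (e x).1 = D x + S x := by rw [hD, hS]; abel
      rw [this]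
      have htri : ‖D x + S x‖ ≤ ‖D x‖ + ‖S x‖ := norm_add_le _ _
      nlinarith [norm_nonneg (D x), norm_nonneg (S x), norm_nonneg (D x + S x),
        sq_nonneg (‖D x‖ - ‖S x‖), mul_self_le_mul_self (norm_nonneg (D x + S x)) htri]
    have hu : ‖(e x).1‖ ^ 2 ≤ CK * (2 * ‖D x‖ ^ 2 + 2 * ‖S x‖ ^ 2) := by
      calc ‖(e x).1‖ ^ 2 ≤ CK * ‖symGrad (e x).1‖ ^ 2 := hKorn _
        _ ≤ CK * (2 * ‖D x‖ ^ 2 + 2 * ‖S x‖ ^ 2) := by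
            exact mul_le_mul_of_nonneg_left hgrad hCK.le
    have hP : ‖(e x).2‖ ^ 2 ≤ ctil * (‖S x‖ ^ 2 + ‖Cu x‖ ^ 2) := by
      rw [hS, hCu]; exact hKornInc _
    have hsum : ‖x‖ ^ 2 ≤ K * (‖D x‖ ^ 2 + ‖S x‖ ^ 2 + ‖Cu x‖ ^ 2) := by
      rw [hnx, hK]; nlinarith [sq_nonneg ‖D x‖, sq_nonneg ‖Cu x‖, sq_nonneg ‖S x‖]
    have hmmin1 : m ≤ ce := min_le_left _ _
    have hmmin2 : m ≤ cm := le_trans (min_le_right _ _) (min_le_left _ _)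
    have hmmin3 : m ≤ lc := le_trans (min_le_right _ _) (min_le_right _ _)
    have hBx : B x x ≥ m * (‖D x‖ ^ 2 + ‖S x‖ ^ 2 + ‖Cu x‖ ^ 2) := by
      rw [hBapp]
      nlinarith [sq_nonneg ‖D x‖, sq_nonneg ‖S x‖, sq_nonneg ‖Cu x‖]
    have : m / K * ‖x‖ ^ 2 ≤ m * (‖D x‖ ^ 2 + ‖S x‖ ^ 2 + ‖Cu x‖ ^ 2) := by
      rw [div_mul_eq_mul_div, div_le_iff₀ hK0]
      calc m * ‖x‖ ^ 2 ≤ m * (K * (‖D x‖ ^ 2 + ‖S x‖ ^ 2 + ‖Cu x‖ ^ 2)) :=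
            mul_le_mul_of_nonneg_left hsum hm0.le
        _ = m * (‖D x‖ ^ 2 + ‖S x‖ ^ 2 + ‖Cu x‖ ^ 2) * K := by ring
    calc m / K * ‖x‖ * ‖x‖ = m / K * ‖x‖ ^ 2 := by ring
      _ ≤ m * (‖D x‖ ^ 2 + ‖S x‖ ^ 2 + ‖Cu x‖ ^ 2) := this
      _ ≤ B x x := hBx
  -- The right-hand-side functional and the solution via Lax–Milgram
  let F : V →L[ℝ] ℝ := f.comp pr1 + M.comp pr2
  let y : V := (InnerProductSpace.toDual ℝ V).symm F
  let x : V := hcoer.continuousLinearEquivOfBilin.symm y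
  have hsol : ∀ w : V, B x w = F w := by
    intro w
    have h1 : ⟪hcoer.continuousLinearEquivOfBilin x, w⟫ = B x w :=
      hcoer.continuousLinearEquivOfBilin_apply x w
    have h2 : hcoer.continuousLinearEquivOfBilin x = y := by
      simp [x]
    rw [h2] at h1
    rw [← h1]
    simp [y]
  have hF : ∀ w : V, F w = f (e w).1 + M (e w).2 := fun w => rfl
  have he : ∀ vW : H1 × H2, e (e.symm vW) = vW := fun vW => e.apply_symm_apply vW
  refine ⟨e x, ?_, ?_⟩
  · intro vW
    have h0 := hsol (e.symm vW)
    rw [hBapp, hD, hS, hCu, hF, he] at h0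
    exact h0
  · intro uP' h'
    have hsol' : ∀ w : V, B (e.symm uP') w = F w := by
      intro w
      have h0 := h' (e w)
      rw [hBapp, hD, hS, hCu, hF, he]
      exact h0
    have hdiff : B (e.symm uP' - x) (e.symm uP' - x) = 0 := by
      have h0 : B (e.symm uP') (e.symm uP' - x) = B x (e.symm uP' - x) := by
        rw [hsol, hsol']
      simp only [map_sub, ContinuousLinearMap.sub_apply] at h0 ⊢
      linarith
    obtain ⟨C, hC, hCle⟩ := hcoer
    have := hCle (e.symm uP' - x)
    rw [hdiff] at this
    have hn0 : ‖e.symm uP' - x‖ = 0 := by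
      by_contra h
      have hp : 0 < ‖e.symm uP' - x‖ := lt_of_le_of_ne (norm_nonneg _) (Ne.symm h)
      have := mul_pos (mul_pos hC hp) hp
      linarith
    have hz : e.symm uP' - x = 0 := norm_eq_zero.mp hn0
    have hx : e.symm uP' = x := sub_eq_zero.mp hz
    rw [← hx]
    exact e.apply_symm_apply uP'
end
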